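/- Let c < 0, g > 0, ε ∈ {−1, 1}, set φ₂* = (c + √(c² + 3g))/2, and let b be a constant with φ₂* < b < φ₀^+. Let I be an open interval containing 0 and let φ : I → ℝ be differentiable with φ(0) = b such that for every ξ ∈ I: φ₂* < φ(ξ) < φ₀^+, φ(ξ)² + m₁φ(ξ) + m₂ > 0, 2√(φ(ξ)² + m₁φ(ξ) + m₂) + 2φ(ξ) + m₁ > 0, 2√(a₂)·√(φ(ξ)² + m₁φ(ξ) + m₂) + b₂φ(ξ) + m₃ > 0, and φ′(ξ) = ε·(φ(ξ) − φ₀^+)·√(φ(ξ)² + m₁φ(ξ) + m₂)/(2φ(ξ)). Then β₂(φ(ξ)) = β₂(b)·exp(εξ/2) for all ξ ∈ I. (The case ε = −1 is the kink-like wave solution φ₃ of equation (3.5), and ε = 1 is the antikink-like wave solution φ₄ of equation (3.6).) -/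

import Mathlib

set_option maxHeartbeats 2000000 in
/-- kink-like (ε = −1, eq. (3.5)) and antikink-like (ε = 1, eq. (3.6))
wave solutions of the osmosis K(2,2) equation for `c < 0`, `g > 0`:
a solution of the orbit equation through `b ∈ (φ₂*, φ₀^+)`, where
`φ₂* = (c + √(c²+3g))/2`, satisfies `β₂(φ(ξ)) = β₂(b)·exp(εξ/2)`. -/
theorem osmosis_K22_kink_like_c_neg_g_pos_plus
    (c g : ℝ) (hc : c < 0) (hg : 0 < g)
    (ε : ℝ) (hε : ε = -1 ∨ ε = 1)
    (s φ0p m1 m2 m3 a2 b2 α2 φ2s : ℝ)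
    (hs : s = Real.sqrt (c ^ 2 + 4 * g))
    (hφ0p : φ0p = (c + s) / 2)
    (hm1 : m1 = -(c - 3 * s) / 3)
    (hm2 : m2 = (c ^ 2 + 6 * g + c * s) / 6)
    (hm3 : m3 = (2 / 3) * (c ^ 2 + 6 * g + c * s))
    (ha2 : a2 = c ^ 2 + 4 * g + c * s)
    (hb2 : b2 = (2 * c + 6 * s) / 3)
    (hα2 : α2 = (c + s) / (2 * Real.sqrt a2))
    (hφ2s : φ2s = (c + Real.sqrt (c ^ 2 + 3 * g)) / 2)
    (β₂ : ℝ → ℝ)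
    (hβ₂ : ∀ x : ℝ, β₂ x =
      (2 * Real.sqrt (x ^ 2 + m1 * x + m2) + 2 * x + m1) * (φ0p - x) ^ α2 /
        (2 * Real.sqrt a2 * Real.sqrt (x ^ 2 + m1 * x + m2) + b2 * x + m3) ^ α2)
    (b : ℝ) (hb : φ2s < b ∧ b < φ0p)
    (I : Set ℝ) (hI : IsOpen I) (hIconv : Convex ℝ I) (h0I : (0:ℝ) ∈ I)
    (φ : ℝ → ℝ) (hφ0 : φ 0 = b)
    (hrange : ∀ ξ ∈ I, φ2s < φ ξ ∧ φ ξ < φ0p)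
    (hq : ∀ ξ ∈ I, 0 < (φ ξ) ^ 2 + m1 * φ ξ + m2)
    (hnum : ∀ ξ ∈ I, 0 < 2 * Real.sqrt ((φ ξ) ^ 2 + m1 * φ ξ + m2) + 2 * φ ξ + m1)
    (hden : ∀ ξ ∈ I,
      0 < 2 * Real.sqrt a2 * Real.sqrt ((φ ξ) ^ 2 + m1 * φ ξ + m2) + b2 * φ ξ + m3)
    (horb : ∀ ξ ∈ I, HasDerivAt φ
      (ε * (φ ξ - φ0p) * Real.sqrt ((φ ξ) ^ 2 + m1 * φ ξ + m2) / (2 * φ ξ)) ξ) :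
    ∀ ξ ∈ I, β₂ (φ ξ) = β₂ b * Real.exp (ε * ξ / 2) := by
  obtain ⟨hbl, hbr⟩ := hb
  have hg4 : (0:ℝ) < c ^ 2 + 4 * g := by positivity
  have hs0 : 0 < s := by rw [hs]; exact Real.sqrt_pos.mpr hg4
  have hs2 : s ^ 2 = c ^ 2 + 4 * g := by rw [hs]; exact Real.sq_sqrt hg4.le
  have hcs : 0 < c + s := by nlinarith
  have hφ0p_pos : 0 < φ0p := by rw [hφ0p]; linarith
  have ha2pos : 0 < a2 := by nlinarith
  set A := Real.sqrt a2 with hAdef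
  have hA0 : 0 < A := Real.sqrt_pos.mpr ha2pos
  have hA2 : A ^ 2 = a2 := Real.sq_sqrt ha2pos.le
  have hα2A : α2 = φ0p / A := by rw [hα2, hφ0p, div_div]
  have h3g : (0:ℝ) < c ^ 2 + 3 * g := by positivity
  have hφ2s_pos : 0 < φ2s := by
    rw [hφ2s]
    nlinarith [Real.sq_sqrt h3g.le, Real.sqrt_nonneg (c ^ 2 + 3 * g)]
  set L : ℝ → ℝ := fun x => Real.log (2 * Real.sqrt (x ^ 2 + m1 * x + m2) + 2 * x + m1)
      + α2 * Real.log (φ0p - x)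
      - α2 * Real.log (2 * A * Real.sqrt (x ^ 2 + m1 * x + m2) + b2 * x + m3) with hL
  have hβL : ∀ x : ℝ, 0 < x ^ 2 + m1 * x + m2 →
      0 < 2 * Real.sqrt (x ^ 2 + m1 * x + m2) + 2 * x + m1 →
      x < φ0p → 0 < 2 * A * Real.sqrt (x ^ 2 + m1 * x + m2) + b2 * x + m3 →
      β₂ x = Real.exp (L x) := by
    intro x hqx hnx hxp hdx
    rw [hβ₂, hL]
    rw [Real.rpow_def_of_pos (by linarith : (0:ℝ) < φ0p - x),
        Real.rpow_def_of_pos hdx, Real.exp_sub, Real.exp_add, Real.exp_log hnx,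
        mul_comm α2 (Real.log (φ0p - x)), mul_comm α2 (Real.log _)]
  have hLd : ∀ ξ ∈ I, HasDerivAt (fun t => L (φ t)) (ε / 2) ξ := by
    intro ξ hξ
    obtain ⟨hr1, hr2⟩ := hrange ξ hξ
    have hx0 : 0 < φ ξ := lt_trans hφ2s_pos hr1
    have hqξ := hq ξ hξ
    have hnξ := hnum ξ hξ
    have hdξ := hden ξ hξ
    set x := φ ξ with hx
    set S := Real.sqrt (x ^ 2 + m1 * x + m2) with hSdef
    have hS0 : 0 < S := Real.sqrt_pos.mpr hqξ
    have hS2 : S ^ 2 = x ^ 2 + m1 * x + m2 := Real.sq_sqrt hqξ.le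
    set v := ε * (x - φ0p) * S / (2 * x) with hv
    have hφd : HasDerivAt φ v ξ := horb ξ hξ
    have hQd : HasDerivAt (fun t => (φ t) ^ 2 + m1 * φ t + m2) (2 * x * v + m1 * v) ξ := by
      have h := ((hφd.pow 2).add (hφd.const_mul m1)).add_const m2
      refine h.congr_deriv ?_; norm_num; exact Or.inl rfl
    have hSd : HasDerivAt (fun t => Real.sqrt ((φ t) ^ 2 + m1 * φ t + m2))
        (1 / (2 * S) * (2 * x * v + m1 * v)) ξ :=
      (Real.hasDerivAt_sqrt hqξ.ne').comp ξ hQd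
    have h1 : HasDerivAt (fun t => Real.log (2 * Real.sqrt ((φ t) ^ 2 + m1 * φ t + m2)
        + 2 * φ t + m1))
        ((2 * (1 / (2 * S) * (2 * x * v + m1 * v)) + 2 * v) / (2 * S + 2 * x + m1)) ξ :=
      (((hSd.const_mul 2).add (hφd.const_mul 2)).add_const m1).log hnξ.ne'
    have h2 : HasDerivAt (fun t => Real.log (φ0p - φ t)) (-v / (φ0p - x)) ξ :=
      (hφd.const_sub φ0p).log (by linarith : φ0p - x ≠ 0)
    have h3 : HasDerivAt (fun t => Real.log (2 * A * Real.sqrt ((φ t) ^ 2 + m1 * φ t + m2)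
        + b2 * φ t + m3))
        ((2 * A * (1 / (2 * S) * (2 * x * v + m1 * v)) + b2 * v)
          / (2 * A * S + b2 * x + m3)) ξ :=
      (((hSd.const_mul (2 * A)).add (hφd.const_mul b2)).add_const m3).log hdξ.ne'
    have htot := (h1.add (h2.const_mul α2)).sub (h3.const_mul α2)
    have K : S * (2 * A * S + b2 * x + m3) + (φ0p - x) * (A * (2 * x + m1) + b2 * S)
        = A * (2 * A * S + b2 * x + m3) := by
      subst hm1 hm2 hm3 hb2 hφ0p ha2
      linear_combination 2 * A * hS2 - 2 * S * hA2 + (A / 2 + S) * hs2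
    have e1 : (2 * (1 / (2 * S) * (2 * x * v + m1 * v)) + 2 * v) / (2 * S + 2 * x + m1)
        = v / S := by
      have hne1 : (2 * S + 2 * x + m1) ≠ 0 := hnξ.ne'
      rw [div_eq_div_iff hne1 hS0.ne']
      field_simp
      ring
    have e3 : (2 * A * (1 / (2 * S) * (2 * x * v + m1 * v)) + b2 * v)
          / (2 * A * S + b2 * x + m3)
        = v * (A * (2 * x + m1) + b2 * S) / (S * (2 * A * S + b2 * x + m3)) := by
      have hne3 : (2 * A * S + b2 * x + m3) ≠ 0 := hdξ.ne'
      field_simp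
    have hW : (φ0p - x) * (A * (2 * x + m1) + b2 * S)
        = (A - S) * (2 * A * S + b2 * x + m3) := by linear_combination K
    have hne2 : (φ0p - x) ≠ 0 := by linarith
    have hne3 : (2 * A * S + b2 * x + m3) ≠ 0 := hdξ.ne'
    have e4 : v * (A * (2 * x + m1) + b2 * S) / (S * (2 * A * S + b2 * x + m3))
        = v * (A - S) / ((φ0p - x) * S) := by
      rw [div_eq_div_iff (by positivity) (by
        exact mul_ne_zero hne2 hS0.ne')]
      linear_combination (v * S) * hW
    have hD : (2 * (1 / (2 * S) * (2 * x * v + m1 * v)) + 2 * v) / (2 * S + 2 * x + m1)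
        + α2 * (-v / (φ0p - x))
        - α2 * ((2 * A * (1 / (2 * S) * (2 * x * v + m1 * v)) + b2 * v)
          / (2 * A * S + b2 * x + m3)) = ε / 2 := by
      rw [e1, e3, e4, hα2A, hv]
      field_simp
      ring
    simp only [hL]
    exact hD ▸ htot
  have hconst : ∀ ξ ∈ I, L (φ ξ) = L (φ 0) + ε * ξ / 2 := by
    intro ξ hξ
    have hder : ∀ t ∈ I, HasDerivWithinAt (fun u => L (φ u) - ε * u / 2)
        ((fun _ => (0:ℝ)) t) I t := by
      intro t ht
      have h4 : HasDerivAt (fun u : ℝ => ε * u / 2) (ε / 2) t := by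
        simpa using ((hasDerivAt_id t).const_mul ε).div_const 2
      have h5 := (hLd t ht).sub h4
      have h6 := h5.hasDerivWithinAt (s := I)
      rw [sub_self] at h6
      exact h6
    have hbound : ∀ t ∈ I, ‖(fun _ => (0:ℝ)) t‖ ≤ (0:ℝ) := fun t _ => by simp
    have hb0 := hIconv.norm_image_sub_le_of_norm_hasDerivWithin_le
      hder hbound h0I hξ
    have h0 : (L (φ ξ) - ε * ξ / 2) - (L (φ 0) - ε * 0 / 2) = 0 := by
      have hle : ‖(L (φ ξ) - ε * ξ / 2) - (L (φ 0) - ε * 0 / 2)‖ ≤ 0 := by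
        simpa using hb0
      exact norm_le_zero_iff.mp hle
    linarith
  intro ξ hξ
  obtain ⟨hr1, hr2⟩ := hrange ξ hξ
  have e1 : β₂ (φ ξ) = Real.exp (L (φ ξ)) :=
    hβL _ (hq ξ hξ) (hnum ξ hξ) hr2 (hden ξ hξ)
  have e2 : β₂ b = Real.exp (L (φ 0)) := by
    rw [← hφ0]
    exact hβL _ (hq 0 h0I) (hnum 0 h0I) (hrange 0 h0I).2 (hden 0 h0I)
  rw [e1, e2, hconst ξ hξ, Real.exp_add]
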